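/- The set of minuscule weights (including 0) forms a complete system of coset representatives for P/Q: every λ ∈ P can be written uniquely as λ = b + α with b minuscule and α ∈ Q. -/

import Mathlib

open scoped RealInnerProductSpace

section
variable {V : Type*} [NormedAddCommGroup V] [InnerProductSpace ℝ V]

private lemma coroot_pair (coroot : V → V)
    (hcoroot : ∀ α : V, coroot α = (2 / ⟪α, α⟫) • α) (x α : V) :
    ⟪x, coroot α⟫ = 2 * ⟪x, α⟫ / ⟪α, α⟫ := by
  rw [hcoroot, real_inner_smul_right]; ring

private lemma reflect_adj (coroot : V → V)
    (hcoroot : ∀ α : V, coroot α = (2 / ⟪α, α⟫) • α)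
    (β γ v : V) (hγ : γ ≠ 0) :
    ⟪v - ⟪v, coroot β⟫ • β, coroot γ⟫ = ⟪v, coroot (γ - ⟪γ, coroot β⟫ • β)⟫ := by
  by_cases hβ : β = 0
  · subst hβ; simp [hcoroot]
  · have hb2 : ⟪β, β⟫ ≠ 0 := inner_self_ne_zero.mpr hβ
    have hg2 : ⟪γ, γ⟫ ≠ 0 := inner_self_ne_zero.mpr hγ
    have hrefl : ⟪γ - ⟪γ, coroot β⟫ • β, γ - ⟪γ, coroot β⟫ • β⟫ = ⟪γ, γ⟫ := by
      rw [hcoroot]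
      simp only [inner_sub_left, inner_sub_right, real_inner_smul_left,
        real_inner_smul_right, real_inner_comm γ β]
      field_simp
      ring
    rw [show coroot (γ - ⟪γ, coroot β⟫ • β) = (2 / ⟪γ, γ⟫) • (γ - ⟪γ, coroot β⟫ • β) from by
      rw [hcoroot, hrefl]]
    rw [hcoroot γ, hcoroot β]
    simp only [inner_sub_left, inner_sub_right, real_inner_smul_left,
      real_inner_smul_right, real_inner_comm γ β, real_inner_comm β v]
    field_simp

private lemma pair_int_sum (R : Finset V) (coroot : V → V)
    (hcrystal : ∀ α ∈ R, ∀ β ∈ R, ∃ z : ℤ, (z : ℝ) = ⟪β, coroot α⟫) :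
    ∀ l : List V, (∀ x ∈ l, x ∈ R) → ∀ γ ∈ R, ∃ z : ℤ, (z : ℝ) = ⟪l.sum, coroot γ⟫ := by
  intro l
  induction l with
  | nil => intro _ γ hγ; exact ⟨0, by simp⟩
  | cons a t ih =>
    intro hl γ hγ
    obtain ⟨z1, hz1⟩ := hcrystal γ hγ a (hl a (by simp))
    obtain ⟨z2, hz2⟩ := ih (fun x hx => hl x (by simp [hx])) γ hγ
    exact ⟨z1 + z2, by push_cast; rw [hz1, hz2, List.sum_cons, inner_add_left]⟩

private lemma listA (R : Finset V) (h0 : (0 : V) ∉ R) (coroot : V → V)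
    (hcoroot : ∀ α : V, coroot α = (2 / ⟪α, α⟫) • α)
    (hcrystal : ∀ α ∈ R, ∀ β ∈ R, ∃ z : ℤ, (z : ℝ) = ⟪β, coroot α⟫)
    (hreflect : ∀ α ∈ R, ∀ β ∈ R, β - ⟪β, coroot α⟫ • α ∈ R) :
    ∀ n : ℕ, ∀ l : List V, l.length ≤ n → (∀ x ∈ l, x ∈ R) →
      (∀ γ ∈ R, |⟪l.sum, coroot γ⟫| ≤ 1) → l.sum = 0 := by
  intro n
  induction n with
  | zero =>
    intro l hn _ _
    rw [List.length_eq_zero_iff.mp (Nat.le_zero.mp hn)]; rfl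
  | succ m ih =>
    intro l hn hl hbound
    classical
    by_contra hv
    set v := l.sum with hvdef
    -- find x ∈ l with ⟪x, v⟫ > 0
    have hpos : ∃ x ∈ l, 0 < ⟪x, v⟫ := by
      by_contra hno
      push_neg at hno
      have hle : ∀ t : List V, (∀ x ∈ t, ⟪x, v⟫ ≤ 0) → ⟪t.sum, v⟫ ≤ 0 := by
        intro t
        induction t with
        | nil => intro _; simp
        | cons a s ihs =>
          intro ht
          rw [List.sum_cons, inner_add_left]
          have := ihs (fun x hx => ht x (by simp [hx]))
          have := ht a (by simp)
          linarith
      have h1 : ⟪v, v⟫ ≤ 0 := hle l hno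
      have h2 : ⟪v, v⟫ ≠ 0 := inner_self_ne_zero.mpr hv
      have h3 : (0:ℝ) ≤ ⟪v, v⟫ := real_inner_self_nonneg
      exact h2 (le_antisymm h1 h3)
    obtain ⟨x, hxl, hxv⟩ := hpos
    have hxR : x ∈ R := hl x hxl
    have hx0 : x ≠ 0 := fun h => h0 (h ▸ hxR)
    have hxx : (0:ℝ) < ⟪x, x⟫ :=
      lt_of_le_of_ne real_inner_self_nonneg (Ne.symm (inner_self_ne_zero.mpr hx0))
    -- pairing of v with coroot x equals 1
    have hp : ⟪v, coroot x⟫ = 1 := by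
      obtain ⟨z, hz⟩ := pair_int_sum R coroot hcrystal l hl x hxR
      have hzpos : (0:ℝ) < (z:ℝ) := by
        rw [hz, coroot_pair coroot hcoroot]
        have : 0 < ⟪v, x⟫ := by rwa [real_inner_comm]
        positivity
      have hzle : (z:ℝ) ≤ 1 := by
        rw [hz]; exact (abs_le.mp (hbound x hxR)).2
      have h1 : 0 < z := by exact_mod_cast hzpos
      have h2 : z ≤ 1 := by exact_mod_cast hzle
      have h3 : z = 1 := by omega
      rw [← hz, h3]; norm_num
    -- the erased list
    have hperm : List.Perm l (x :: l.erase x) := List.perm_cons_erase hxl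
    have hsum : v = x + (l.erase x).sum := by
      rw [hvdef, hperm.sum_eq, List.sum_cons]
    have hlen : (l.erase x).length ≤ m := by
      have := List.length_erase_of_mem hxl
      omega
    have hmem : ∀ y ∈ l.erase x, y ∈ R := fun y hy => hl y (List.mem_of_mem_erase hy)
    have hbound' : ∀ γ ∈ R, |⟪(l.erase x).sum, coroot γ⟫| ≤ 1 := by
      intro γ hγ
      have hγ0 : γ ≠ 0 := fun h => h0 (h ▸ hγ)
      have hsum' : (l.erase x).sum = v - ⟪v, coroot x⟫ • x := by
        rw [hp, one_smul, hsum]; abel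
      rw [hsum', reflect_adj coroot hcoroot x γ v hγ0]
      exact hbound _ (hreflect x hxR γ hγ)
    have hzero := ih (l.erase x) hlen hmem hbound'
    -- then v = x, contradiction with |⟪x, coroot x⟫| = 2
    have hvx : v = x := by rw [hsum, hzero, add_zero]
    have : |⟪v, coroot x⟫| ≤ 1 := hbound x hxR
    rw [hvx, coroot_pair coroot hcoroot, mul_div_assoc,
      div_self (ne_of_gt hxx), mul_one] at this
    have := (abs_le.mp this).2
    linarith

private lemma descend (R posR : Finset V) (hsub : posR ⊆ R)
    (h0 : (0 : V) ∉ R) (coroot : V → V)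
    (hcoroot : ∀ α : V, coroot α = (2 / ⟪α, α⟫) • α)
    (hcrystal : ∀ α ∈ R, ∀ β ∈ R, ∃ z : ℤ, (z : ℝ) = ⟪β, coroot α⟫)
    (f : V →ₗ[ℝ] ℝ) (hf : ∀ α ∈ R, (0 < f α ↔ α ∈ posR) ∧ f α ≠ 0)
    (C : ℝ) (hC0 : 0 ≤ C) (hC : ∀ x : V, f x ≤ C * ‖x‖)
    (δ₁ δ₂ A W : ℝ) (hδ₁pos : 0 < δ₁) (hδ₂pos : 0 < δ₂) (hW0 : 0 ≤ W)
    (hδ₁ : ∀ α ∈ posR, δ₁ ≤ ⟪α, α⟫) (hδ₂ : ∀ α ∈ posR, δ₂ ≤ f α)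
    (hA : ∀ α ∈ posR, f α ≤ A) (hW : A + δ₂ ≤ W * δ₁)
    (b : V) (hb : ∀ α ∈ R, ∃ z : ℤ, (z : ℝ) = ⟪b, coroot α⟫)
    (α : V) (hα : α ∈ posR) (hviol : ¬(0 ≤ ⟪b, coroot α⟫ ∧ ⟪b, coroot α⟫ ≤ 1)) :
    ∃ b' : V, (∀ γ ∈ R, ∃ z : ℤ, (z : ℝ) = ⟪b', coroot γ⟫) ∧
      b - b' ∈ AddSubgroup.closure (R : Set V) ∧
      W * ⟪b', b'⟫ + (C * ‖b'‖ - f b') + δ₂ ≤ W * ⟪b, b⟫ + (C * ‖b‖ - f b) := by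
  have hαR : α ∈ R := hsub hα
  have hα0 : α ≠ 0 := fun h => h0 (h ▸ hαR)
  have hαα : (0:ℝ) < ⟪α, α⟫ :=
    lt_of_le_of_ne real_inner_self_nonneg (Ne.symm (inner_self_ne_zero.mpr hα0))
  obtain ⟨z, hz⟩ := hb α hαR
  have h2ba : ⟪α, α⟫ * ⟪b, coroot α⟫ = 2 * ⟪b, α⟫ := by
    rw [coroot_pair coroot hcoroot]; field_simp
  have hqsub : ⟪b - α, b - α⟫ = ⟪b, b⟫ - ⟪α, α⟫ * ⟪b, coroot α⟫ + ⟪α, α⟫ := by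
    rw [h2ba]
    simp only [inner_sub_left, inner_sub_right, real_inner_comm α b]
    ring
  have hqadd : ⟪b + α, b + α⟫ = ⟪b, b⟫ + ⟪α, α⟫ * ⟪b, coroot α⟫ + ⟪α, α⟫ := by
    rw [h2ba]
    simp only [inner_add_left, inner_add_right, real_inner_comm α b]
    ring
  have hfα : δ₂ ≤ f α := hδ₂ α hα
  have hfA : f α ≤ A := hA α hα
  have hδ₁α : δ₁ ≤ ⟪α, α⟫ := hδ₁ α hα
  have hintsub : ∀ γ ∈ R, ∃ w : ℤ, (w : ℝ) = ⟪b - α, coroot γ⟫ := by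
    intro γ hγ
    obtain ⟨z1, hz1⟩ := hb γ hγ
    obtain ⟨z2, hz2⟩ := hcrystal γ hγ α hαR
    exact ⟨z1 - z2, by push_cast; rw [hz1, hz2, inner_sub_left]⟩
  have hintadd : ∀ γ ∈ R, ∃ w : ℤ, (w : ℝ) = ⟪b + α, coroot γ⟫ := by
    intro γ hγ
    obtain ⟨z1, hz1⟩ := hb γ hγ
    obtain ⟨z2, hz2⟩ := hcrystal γ hγ α hαR
    exact ⟨z1 + z2, by push_cast; rw [hz1, hz2, inner_add_left]⟩
  have hnorm_le : ∀ x y : V, ⟪x, x⟫ ≤ ⟪y, y⟫ → ‖x‖ ≤ ‖y‖ := by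
    intro x y h
    rw [real_inner_self_eq_norm_mul_norm, real_inner_self_eq_norm_mul_norm] at h
    nlinarith [norm_nonneg x, norm_nonneg y]
  have hmemsub : b - (b - α) ∈ AddSubgroup.closure (R : Set V) := by
    simpa using AddSubgroup.subset_closure (by exact_mod_cast hαR : α ∈ (R : Set V))
  have hmemadd : b - (b + α) ∈ AddSubgroup.closure (R : Set V) := by
    have := AddSubgroup.neg_mem _
      (AddSubgroup.subset_closure (by exact_mod_cast hαR : α ∈ (R : Set V)))
    simpa using this
  have hzcase : z ≥ 2 ∨ z = -1 ∨ z ≤ -2 := by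
    by_contra hcon
    push_neg at hcon
    apply hviol
    have h1 : (0:ℤ) ≤ z := by omega
    have h2 : z ≤ 1 := by omega
    constructor
    · rw [← hz]; exact_mod_cast h1
    · rw [← hz]; exact_mod_cast h2
  rcases hzcase with hge2 | hm1 | hlem2
  · -- b' = b - α
    refine ⟨b - α, hintsub, hmemsub, ?_⟩
    have hzge : (2:ℝ) ≤ ⟪b, coroot α⟫ := by rw [← hz]; exact_mod_cast hge2
    have hq : ⟪b - α, b - α⟫ ≤ ⟪b, b⟫ - δ₁ := by
      rw [hqsub]; nlinarith
    have hn : ‖b - α‖ ≤ ‖b‖ := hnorm_le _ _ (by linarith)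
    have hfsub : f (b - α) = f b - f α := map_sub f b α
    have hWq : W * ⟪b - α, b - α⟫ ≤ W * ⟪b, b⟫ - W * δ₁ := by nlinarith
    have hCn : C * ‖b - α‖ ≤ C * ‖b‖ := mul_le_mul_of_nonneg_left hn hC0
    nlinarith
  · -- b' = b + α, pairing = -1
    refine ⟨b + α, hintadd, hmemadd, ?_⟩
    have hzeq : ⟪b, coroot α⟫ = -1 := by rw [← hz, hm1]; norm_num
    have hq : ⟪b + α, b + α⟫ = ⟪b, b⟫ := by rw [hqadd, hzeq]; ring
    have hn : ‖b + α‖ = ‖b‖ := by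
      have h1 := hnorm_le (b + α) b (le_of_eq hq)
      have h2 := hnorm_le b (b + α) (le_of_eq hq.symm)
      linarith
    have hfadd : f (b + α) = f b + f α := map_add f b α
    rw [hq, hn, hfadd]
    linarith
  · -- b' = b + α, pairing ≤ -2
    refine ⟨b + α, hintadd, hmemadd, ?_⟩
    have hzle : ⟪b, coroot α⟫ ≤ -2 := by rw [← hz]; exact_mod_cast hlem2
    have hq : ⟪b + α, b + α⟫ ≤ ⟪b, b⟫ - δ₁ := by
      rw [hqadd]; nlinarith
    have hn : ‖b + α‖ ≤ ‖b‖ := hnorm_le _ _ (by linarith)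
    have hfadd : f (b + α) = f b + f α := map_add f b α
    have hWq : W * ⟪b + α, b + α⟫ ≤ W * ⟪b, b⟫ - W * δ₁ := by nlinarith
    have hCn : C * ‖b + α‖ ≤ C * ‖b‖ := mul_le_mul_of_nonneg_left hn hC0
    nlinarith

private lemma exists_minuscule (R posR : Finset V) (hsub : posR ⊆ R)
    (h0 : (0 : V) ∉ R) (coroot : V → V)
    (hcoroot : ∀ α : V, coroot α = (2 / ⟪α, α⟫) • α)
    (hcrystal : ∀ α ∈ R, ∀ β ∈ R, ∃ z : ℤ, (z : ℝ) = ⟪β, coroot α⟫)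
    (f : V →ₗ[ℝ] ℝ) (hf : ∀ α ∈ R, (0 < f α ↔ α ∈ posR) ∧ f α ≠ 0)
    (C : ℝ) (hC0 : 0 ≤ C) (hC : ∀ x : V, f x ≤ C * ‖x‖)
    (δ₁ δ₂ A W : ℝ) (hδ₁pos : 0 < δ₁) (hδ₂pos : 0 < δ₂) (hW0 : 0 ≤ W)
    (hδ₁ : ∀ α ∈ posR, δ₁ ≤ ⟪α, α⟫) (hδ₂ : ∀ α ∈ posR, δ₂ ≤ f α)
    (hA : ∀ α ∈ posR, f α ≤ A) (hW : A + δ₂ ≤ W * δ₁) :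
    ∀ n : ℕ, ∀ b : V, (∀ α ∈ R, ∃ z : ℤ, (z : ℝ) = ⟪b, coroot α⟫) →
      W * ⟪b, b⟫ + (C * ‖b‖ - f b) ≤ n * δ₂ →
      ∃ c : V, (∀ α ∈ R, ∃ z : ℤ, (z : ℝ) = ⟪c, coroot α⟫) ∧
        (∀ α ∈ posR, 0 ≤ ⟪c, coroot α⟫ ∧ ⟪c, coroot α⟫ ≤ 1) ∧
        b - c ∈ AddSubgroup.closure (R : Set V) := by
  have hμ0 : ∀ b : V, 0 ≤ W * ⟪b, b⟫ + (C * ‖b‖ - f b) := by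
    intro b
    have h1 : 0 ≤ W * ⟪b, b⟫ := mul_nonneg hW0 real_inner_self_nonneg
    have h2 : f b ≤ C * ‖b‖ := hC b
    linarith
  intro n
  induction n with
  | zero =>
    intro b hb hμ
    by_cases hmin : ∀ α ∈ posR, 0 ≤ ⟪b, coroot α⟫ ∧ ⟪b, coroot α⟫ ≤ 1
    · exact ⟨b, hb, hmin, by simpa using (AddSubgroup.closure (R : Set V)).zero_mem⟩
    · exfalso
      push_neg at hmin
      obtain ⟨α, hα, hviol⟩ := hmin
      obtain ⟨b', _, _, hdec⟩ := descend R posR hsub h0 coroot hcoroot hcrystal f hf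
        C hC0 hC δ₁ δ₂ A W hδ₁pos hδ₂pos hW0 hδ₁ hδ₂ hA hW b hb α hα
        (fun h => absurd h.2 (not_le.mpr (hviol h.1)))
      have := hμ0 b'
      simp only [Nat.cast_zero, zero_mul] at hμ
      linarith
  | succ m ih =>
    intro b hb hμ
    by_cases hmin : ∀ α ∈ posR, 0 ≤ ⟪b, coroot α⟫ ∧ ⟪b, coroot α⟫ ≤ 1
    · exact ⟨b, hb, hmin, by simpa using (AddSubgroup.closure (R : Set V)).zero_mem⟩
    · push_neg at hmin
      obtain ⟨α, hα, hviol⟩ := hmin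
      obtain ⟨b', hb', hQ, hdec⟩ := descend R posR hsub h0 coroot hcoroot hcrystal f hf
        C hC0 hC δ₁ δ₂ A W hδ₁pos hδ₂pos hW0 hδ₁ hδ₂ hA hW b hb α hα
        (fun h => absurd h.2 (not_le.mpr (hviol h.1)))
      obtain ⟨c, hc1, hc2, hc3⟩ := ih b' hb' (by push_cast at hμ ⊢; linarith)
      refine ⟨c, hc1, hc2, ?_⟩
      have : b - c = (b - b') + (b' - c) := by abel
      rw [this]
      exact AddSubgroup.add_mem _ hQ hc3


private lemma closure_list (R : Finset V) (hneg : ∀ α ∈ R, -α ∈ R) :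
    ∀ x ∈ AddSubgroup.closure (R : Set V),
      ∃ l : List V, (∀ y ∈ l, y ∈ R) ∧ l.sum = x := by
  have hmapneg : ∀ l : List V, (l.map (fun y : V => -y)).sum = -l.sum := by
    intro l
    induction l with
    | nil => simp
    | cons a t ih => simp [ih]; abel
  intro x hx
  induction hx using AddSubgroup.closure_induction with
  | mem y hy => exact ⟨[y], by simpa using hy, by simp⟩
  | zero => exact ⟨[], by simp, by simp⟩
  | add a b _ _ ha hb =>
    obtain ⟨l1, h1, h1s⟩ := ha
    obtain ⟨l2, h2, h2s⟩ := hb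
    refine ⟨l1 ++ l2, ?_, by rw [List.sum_append, h1s, h2s]⟩
    intro y hy
    rcases List.mem_append.mp hy with h | h
    · exact h1 y h
    · exact h2 y h
  | neg a _ ha =>
    obtain ⟨l, h1, h1s⟩ := ha
    refine ⟨l.map (fun y => -y), ?_, by rw [hmapneg, h1s]⟩
    intro y hy
    obtain ⟨z, hz, rfl⟩ := List.mem_map.mp hy
    exact hneg z (h1 z hz)


end


/-- For a reduced irreducible (crystallographic) root system `R` with
positive system `posR`, weight lattice `P = {v : (v, α^∨) ∈ ℤ for all α ∈ R}` and root
lattice `Q` (the subgroup generated by `R`), the minuscule weights (those dominant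
weights `b` with `0 ≤ (b, α^∨) ≤ 1` for all positive `α`, including `0`) form a complete
system of coset representatives of `P/Q`: every weight `lam` can be written uniquely as
`lam = b + α` with `b` minuscule and `α ∈ Q`. -/
theorem stmt7 {V : Type*} [NormedAddCommGroup V] [InnerProductSpace ℝ V]
    (R posR : Finset V) (hsub : posR ⊆ R) (h0 : (0 : V) ∉ R)
    (hneg : ∀ α ∈ R, -α ∈ R)
    (hRdecomp : ∀ α ∈ R, (α ∈ posR ∧ -α ∉ posR) ∨ (α ∉ posR ∧ -α ∈ posR))
    (hpossys : ∃ f : V →ₗ[ℝ] ℝ, ∀ α ∈ R, (0 < f α ↔ α ∈ posR) ∧ f α ≠ 0)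
    (hspanR : Submodule.span ℝ (R : Set V) = ⊤)
    (coroot : V → V) (hcoroot : ∀ α : V, coroot α = (2 / ⟪α, α⟫) • α)
    (hreduced : ∀ α ∈ R, ∀ c : ℝ, c • α ∈ R → c = 1 ∨ c = -1)
    (hcrystal : ∀ α ∈ R, ∀ β ∈ R, ∃ z : ℤ, (z : ℝ) = ⟪β, coroot α⟫)
    (hreflect : ∀ α ∈ R, ∀ β ∈ R, β - ⟪β, coroot α⟫ • α ∈ R)
    (hirred : ∀ R1 R2 : Set V, R1 ∪ R2 = (R : Set V) →
      (∀ x ∈ R1, ∀ y ∈ R2, ⟪x, y⟫ = (0 : ℝ)) → R1 = ∅ ∨ R2 = ∅)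
    (lam : V) (hlam : ∀ α ∈ R, ∃ z : ℤ, (z : ℝ) = ⟪lam, coroot α⟫) :
    ∃! bq : V × V,
      ((∀ α ∈ R, ∃ z : ℤ, (z : ℝ) = ⟪bq.1, coroot α⟫) ∧
        (∀ α ∈ posR, 0 ≤ ⟪bq.1, coroot α⟫ ∧ ⟪bq.1, coroot α⟫ ≤ 1)) ∧
      bq.2 ∈ AddSubgroup.closure (R : Set V) ∧
      lam = bq.1 + bq.2 := by
  -- existence of a minuscule representative
  have hex : ∃ c : V, (∀ α ∈ R, ∃ z : ℤ, (z : ℝ) = ⟪c, coroot α⟫) ∧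
      (∀ α ∈ posR, 0 ≤ ⟪c, coroot α⟫ ∧ ⟪c, coroot α⟫ ≤ 1) ∧
      lam - c ∈ AddSubgroup.closure (R : Set V) := by
    by_cases hpos : posR.Nonempty
    · obtain ⟨f, hf⟩ := hpossys
      have hfd : FiniteDimensional ℝ V := by
        have h1 : FiniteDimensional ℝ (Submodule.span ℝ (R : Set V)) :=
          FiniteDimensional.span_of_finite ℝ (R.finite_toSet)
        rw [hspanR] at h1
        exact Module.Finite.equiv (Submodule.topEquiv : (⊤ : Submodule ℝ V) ≃ₗ[ℝ] V)
      set F := LinearMap.toContinuousLinearMap f with hF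
      have hC : ∀ x : V, f x ≤ ‖F‖ * ‖x‖ := by
        intro x
        calc f x ≤ |f x| := le_abs_self _
        _ = ‖F x‖ := by rw [Real.norm_eq_abs]; rfl
        _ ≤ ‖F‖ * ‖x‖ := F.le_opNorm x
      obtain ⟨α₀, hα₀⟩ := id hpos
      set δ₁ := (posR.image fun α => ⟪α, α⟫).min' (hpos.image _) with hδ₁def
      set δ₂ := (posR.image fun α => f α).min' (hpos.image _) with hδ₂def
      set A := (posR.image fun α => f α).max' (hpos.image _) with hAdef
      have hδ₁ : ∀ α ∈ posR, δ₁ ≤ ⟪α, α⟫ := fun α hα =>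
        Finset.min'_le _ _ (Finset.mem_image_of_mem _ hα)
      have hδ₂ : ∀ α ∈ posR, δ₂ ≤ f α := fun α hα =>
        Finset.min'_le _ _ (Finset.mem_image_of_mem _ hα)
      have hA : ∀ α ∈ posR, f α ≤ A := fun α hα =>
        Finset.le_max' _ _ (Finset.mem_image_of_mem _ hα)
      have hδ₁pos : 0 < δ₁ := by
        obtain ⟨β, hβ, hβeq⟩ := Finset.mem_image.mp
          (Finset.min'_mem (posR.image fun α => ⟪α, α⟫) (hpos.image _))
        rw [hδ₁def, ← hβeq]
        have hβ0 : β ≠ 0 := fun h => h0 (h ▸ hsub hβ)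
        exact lt_of_le_of_ne real_inner_self_nonneg (Ne.symm (inner_self_ne_zero.mpr hβ0))
      have hδ₂pos : 0 < δ₂ := by
        obtain ⟨β, hβ, hβeq⟩ := Finset.mem_image.mp
          (Finset.min'_mem (posR.image fun α => f α) (hpos.image _))
        rw [hδ₂def, ← hβeq]
        exact (hf β (hsub hβ)).1.mpr hβ
      have hAδ : δ₂ ≤ A := le_trans (hδ₂ α₀ hα₀) (hA α₀ hα₀)
      set W := (A + δ₂) / δ₁ with hWdef
      have hW : A + δ₂ ≤ W * δ₁ := le_of_eq (div_mul_cancel₀ _ (ne_of_gt hδ₁pos)).symm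
      have hW0 : 0 ≤ W := div_nonneg (by linarith) (le_of_lt hδ₁pos)
      obtain ⟨n, hn⟩ := exists_nat_ge
        ((W * ⟪lam, lam⟫ + (‖F‖ * ‖lam‖ - f lam)) / δ₂)
      have hμ : W * ⟪lam, lam⟫ + (‖F‖ * ‖lam‖ - f lam) ≤ n * δ₂ :=
        (div_le_iff₀ hδ₂pos).mp hn
      exact exists_minuscule R posR hsub h0 coroot hcoroot hcrystal f hf ‖F‖
        (norm_nonneg F) hC δ₁ δ₂ A W hδ₁pos hδ₂pos hW0 hδ₁ hδ₂ hA hW n lam hlam hμ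
    · refine ⟨lam, hlam, ?_, by simpa using (AddSubgroup.closure (R : Set V)).zero_mem⟩
      intro α hα
      exact absurd (⟨α, hα⟩ : posR.Nonempty) hpos
  obtain ⟨c, hc1, hc2, hcQ⟩ := hex
  refine ⟨(c, lam - c), ⟨⟨hc1, hc2⟩, hcQ, by simp⟩, ?_⟩
  rintro ⟨b₂, q₂⟩ ⟨⟨hb1, hb2⟩, hq2, hlameq⟩
  simp only at hb1 hb2 hq2 hlameq
  -- uniqueness: v := b₂ - c lies in Q and has all pairings in [-1,1]
  have hvQ : b₂ - c ∈ AddSubgroup.closure (R : Set V) := by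
    have : b₂ - c = (lam - c) - q₂ := by rw [hlameq]; abel
    rw [this]
    exact AddSubgroup.sub_mem _ hcQ hq2
  obtain ⟨l, hlR, hlsum⟩ := closure_list R hneg _ hvQ
  have hbound : ∀ γ ∈ R, |⟪l.sum, coroot γ⟫| ≤ 1 := by
    intro γ hγ
    rw [hlsum]
    have key : ∀ β ∈ posR, |⟪b₂ - c, coroot β⟫| ≤ 1 := by
      intro β hβ
      have h1 := hb2 β hβ
      have h2 := hc2 β hβ
      rw [inner_sub_left]
      rw [abs_le]
      constructor <;> [linarith [h1.1, h2.2]; linarith [h1.2, h2.1]]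
    rcases hRdecomp γ hγ with ⟨h1, _⟩ | ⟨_, h2⟩
    · exact key γ h1
    · have hcor : coroot (-γ) = -coroot γ := by
        rw [hcoroot, hcoroot]
        simp
      have := key (-γ) h2
      rw [hcor, inner_neg_right, abs_neg] at this
      exact this
  have hv0 : b₂ - c = 0 := by
    rw [← hlsum]
    exact listA R h0 coroot hcoroot hcrystal hreflect l.length l le_rfl hlR hbound
  have hb₂ : b₂ = c := by
    have := sub_eq_zero.mp hv0
    exact this
  have hq₂ : q₂ = lam - c := by
    rw [hlameq, hb₂]; abel
  rw [hb₂, hq₂]
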